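/- Let Q = R(P − I) be a Q-matrix on a finite state space V with R diagonal with positive entries and P stochastic, and suppose the null space of Q is one-dimensional. Define π_x = det(−Q^{{x}}) / Π_{−Q}, where Π_{−Q} is the product of the nonzero eigenvalues of −Q. Then Π_{−Q} > 0, π is a probability distribution on V, and π is the unique probability vector satisfying πQ = 0. -/

import Mathlib

open Matrix BigOperators Polynomial

section Aux

variable {n R ι : Type*} [Fintype n] [DecidableEq n] [CommRing R]

lemma deriv_fprod [DecidableEq ι] (s : Finset ι) (f : ι → R[X]) :
    derivative (∏ i ∈ s, f i) = ∑ i ∈ s, (∏ j ∈ s.erase i, f j) * derivative (f i) := by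
  induction s using Finset.induction with
  | empty => simp
  | @insert a s ha ih =>
    rw [Finset.prod_insert ha, derivative_mul, ih, Finset.sum_insert ha,
      Finset.erase_insert ha, Finset.mul_sum]
    congr 1
    · exact mul_comm _ _
    refine Finset.sum_congr rfl fun i hi => ?_
    rw [Finset.erase_insert_of_ne (by rintro rfl; exact ha hi), Finset.prod_insert
      (fun h => ha (Finset.mem_of_mem_erase h))]
    ring

lemma deriv_det (A : Matrix n n R[X]) :
    derivative A.det = ∑ i, (A.updateRow i (fun j => derivative (A i j))).det := by
  simp_rw [Matrix.det_apply]
  rw [map_sum]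
  rw [Finset.sum_comm]
  refine Finset.sum_congr rfl fun σ _ => ?_
  have : derivative (Equiv.Perm.sign σ • ∏ i, A (σ i) i)
      = Equiv.Perm.sign σ • derivative (∏ i, A (σ i) i) := by
    rcases Int.units_eq_one_or (Equiv.Perm.sign σ) with h | h <;> simp [h]
  rw [this, deriv_fprod]
  rw [← Equiv.sum_comp σ (fun k => Equiv.Perm.sign σ •
    ∏ x, (A.updateRow k fun j => derivative (A k j)) (σ x) x)]
  rw [← Finset.smul_sum]
  congr 1
  refine Finset.sum_congr rfl fun i _ => ?_
  rw [← Finset.mul_prod_erase Finset.univ _ (Finset.mem_univ i)]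
  have h1 : (A.updateRow (σ i) fun j => derivative (A (σ i) j)) (σ i) i
      = derivative (A (σ i) i) := by simp
  rw [h1, mul_comm]
  congr 1
  refine Finset.prod_congr rfl fun k hk => ?_
  rw [Matrix.updateRow_apply, if_neg]
  exact fun h => (Finset.mem_erase.mp hk).1 (σ.injective h)

lemma charpoly_coeff_one (M : Matrix n n R) :
    (Matrix.charpoly M).coeff 1 = ∑ i, adjugate (-M) i i := by
  have h0 : (Matrix.charpoly M).coeff 1 = (derivative (Matrix.charpoly M)).eval 0 := by
    rw [← Polynomial.coeff_zero_eq_eval_zero, Polynomial.coeff_derivative]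
    simp
  rw [h0, Matrix.charpoly, deriv_det, eval_finset_sum]
  refine Finset.sum_congr rfl fun i _ => ?_
  rw [Matrix.adjugate_apply, ← Polynomial.coe_evalRingHom, RingHom.map_det]
  congr 1
  ext a b
  rcases eq_or_ne a i with rfl | hai
  · rcases eq_or_ne a b with rfl | hab
    · simp [charmatrix_apply_eq, Pi.single_apply]
    · simp [charmatrix_apply_ne _ _ _ hab, Pi.single_apply, Ne.symm hab]
  · rcases eq_or_ne a b with rfl | hab
    · simp [Matrix.updateRow_ne hai, charmatrix_apply_eq]
    · simp [Matrix.updateRow_ne hai, charmatrix_apply_ne _ _ _ hab]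

end Aux

/-- The principal submatrix of `M` obtained by deleting the rows and columns
indexed by the finite set `Δ`. -/
def mdel {V : Type*} [DecidableEq V] (M : Matrix V V ℝ) (Δ : Finset V) :
    Matrix {a // a ∉ Δ} {a // a ∉ Δ} ℝ :=
  M.submatrix Subtype.val Subtype.val

/-- `Π_M`, the product of the nonzero eigenvalues of `M` (when `0` is an eigenvalue
of `M`): it equals `(-1)^{N-1}` times the coefficient of `λ` in the characteristic
polynomial of `M`. -/
noncomputable def prodNZ {V : Type*} [Fintype V] [DecidableEq V]
    (M : Matrix V V ℝ) : ℝ :=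
  (-1) ^ (Fintype.card V - 1) * (Matrix.charpoly M).coeff 1

section Aux2

variable {V : Type*} [Fintype V] [DecidableEq V]

/-- reindexing equiv putting `x` first -/
def eqx (x : V) : Unit ⊕ {a : V // a ∉ ({x} : Finset V)} ≃ V where
  toFun := Sum.elim (fun _ => x) Subtype.val
  invFun a := if h : a ∈ ({x} : Finset V) then Sum.inl () else Sum.inr ⟨a, h⟩
  left_inv s := by
    rcases s with _ | ⟨a, ha⟩
    · simp
    · simp [ha]
  right_inv a := by
    by_cases h : a ∈ ({x} : Finset V)
    · simp [h]; simp at h; exact h.symm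
    · simp [h]

lemma adjugate_diag (M : Matrix V V ℝ) (x : V) :
    adjugate M x x = (mdel M {x}).det := by
  rw [Matrix.adjugate_apply, ← Matrix.det_submatrix_equiv_self (eqx x)]
  have : (M.updateRow x (Pi.single x 1)).submatrix (eqx x) (eqx x)
      = Matrix.fromBlocks 1 0 (Matrix.of fun (a : {a : V // a ∉ ({x} : Finset V)}) (_ : Unit) => M a.val x) (mdel M {x}) := by
    ext a b
    rcases a with _ | ⟨a, ha⟩ <;> rcases b with _ | ⟨b, hb⟩
    · simp [eqx, Matrix.submatrix_apply, Pi.single_apply]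
    · simp only [Matrix.submatrix_apply, Matrix.fromBlocks_apply₁₂]
      have hb' : b ≠ x := by simpa using hb
      simp [eqx, Pi.single_apply, hb']
    · have ha' : a ≠ x := by simpa using ha
      simp [eqx, Matrix.updateRow_ne ha']
    · have ha' : a ≠ x := by simpa using ha
      simp [eqx, Matrix.updateRow_ne ha', mdel]
  rw [this, Matrix.det_fromBlocks_zero₁₂]
  simp

lemma det_nonneg_of_rowdom (A : Matrix V V ℝ) (hoff : ∀ i j, i ≠ j → A i j ≤ 0)
    (hrow : ∀ i, 0 ≤ ∑ j, A i j) : 0 ≤ A.det := by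
  cases isEmpty_or_nonempty V
  · simp [Matrix.det_isEmpty]
  have hdiag : ∀ i, ∑ j ∈ Finset.univ.erase i, |A i j| ≤ A i i := by
    intro i
    have h1 : A i i + ∑ j ∈ Finset.univ.erase i, A i j = ∑ j, A i j :=
      Finset.add_sum_erase _ _ (Finset.mem_univ i)
    have h2 : ∑ j ∈ Finset.univ.erase i, |A i j| = - ∑ j ∈ Finset.univ.erase i, A i j := by
      rw [← Finset.sum_neg_distrib]
      exact Finset.sum_congr rfl fun j hj =>
        abs_of_nonpos (hoff i j (Ne.symm (Finset.mem_erase.mp hj).1))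
    rw [h2]
    linarith [hrow i]
  have hdiag0 : ∀ i, 0 ≤ A i i := fun i =>
    le_trans (Finset.sum_nonneg fun j _ => abs_nonneg _) (hdiag i)
  -- the polynomial t ↦ det (t • 1 + A)
  set p := Matrix.charpoly (-A) with hp
  have heval : ∀ t : ℝ, p.eval t = (t • (1 : Matrix V V ℝ) + A).det := by
    intro t
    rw [hp, Matrix.charpoly, ← Polynomial.coe_evalRingHom, RingHom.map_det]
    congr 1
    ext a b
    rcases eq_or_ne a b with rfl | hab
    · simp [charmatrix_apply_eq]
    · simp [charmatrix_apply_ne _ _ _ hab, Matrix.one_apply_ne hab]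
  have hkey : ∀ t : ℝ, 0 < t → (t • (1 : Matrix V V ℝ) + A).det ≠ 0 := by
    intro t ht
    refine det_ne_zero_of_sum_row_lt_diag fun k => ?_
    have hoffeq : ∑ j ∈ Finset.univ.erase k, ‖(t • (1 : Matrix V V ℝ) + A) k j‖
        = ∑ j ∈ Finset.univ.erase k, |A k j| := by
      refine Finset.sum_congr rfl fun j hj => ?_
      have : k ≠ j := fun h => (Finset.mem_erase.mp hj).1 h.symm
      simp [Matrix.one_apply_ne this, Real.norm_eq_abs]
    rw [hoffeq]
    have hkk : (t • (1 : Matrix V V ℝ) + A) k k = t + A k k := by simp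
    rw [hkk, Real.norm_eq_abs, abs_of_pos (by linarith [hdiag0 k])]
    calc ∑ j ∈ Finset.univ.erase k, |A k j| ≤ A k k := hdiag k
      _ < t + A k k := by linarith
  by_contra hdet
  push_neg at hdet
  have hndeg : p.natDegree = Fintype.card V := Matrix.charpoly_natDegree_eq_dim (-A)
  have hdeg : 0 < p.degree := by
    rw [← Polynomial.natDegree_pos_iff_degree_pos, hndeg]
    exact Fintype.card_pos
  have htend := Polynomial.tendsto_atTop_of_leadingCoeff_nonneg p hdeg
    (by rw [(Matrix.charpoly_monic (-A)).leadingCoeff]; norm_num)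
  obtain ⟨T, hT1, hT0⟩ := ((htend.eventually_ge_atTop 1).and
    (Filter.eventually_ge_atTop (1:ℝ))).exists
  have h0T : (0:ℝ) ≤ T := by linarith
  have hivt : (0:ℝ) ∈ Set.Icc (p.eval 0) (p.eval T) := by
    constructor
    · rw [heval 0]
      simpa using hdet.le
    · linarith
  obtain ⟨c, hc, hceval⟩ := intermediate_value_Icc h0T p.continuousOn hivt
  have hc0 : c ≠ 0 := by
    intro h
    rw [h] at hceval
    simp only [] at hceval
    rw [heval 0] at hceval
    simp only [zero_smul, zero_add] at hceval
    rw [hceval] at hdet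
    exact lt_irrefl _ hdet
  have hcpos : 0 < c := lt_of_le_of_ne hc.1 (Ne.symm hc0)
  exact hkey c hcpos (by rw [← heval c]; exact hceval)

end Aux2

/-- Theorem (stationary distribution formula): let `Q = R(P-I)` be a `Q`-matrix with
`R` diagonal positive and `P` stochastic, and suppose the null space of `Q` is
one-dimensional.  With `π_x = det(-Q^{{x}}) / Π_{-Q}`, one has `Π_{-Q} > 0`, `π` is a
probability distribution, `πQ = 0`, and `π` is the unique probability vector with
`μQ = 0`. -/
theorem stmt9 {V : Type*} [Fintype V] [DecidableEq V]
    (r : V → ℝ) (hr : ∀ v, 0 < r v)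
    (P : Matrix V V ℝ) (hpos : ∀ a b, 0 ≤ P a b) (hrow : ∀ a, ∑ b, P a b = 1)
    (Q : Matrix V V ℝ) (hQ : Q = Matrix.diagonal r * (P - 1))
    (hnull : Module.finrank ℝ (LinearMap.ker (Matrix.toLin' Q)) = 1) :
    0 < prodNZ (-Q) ∧
    (∀ x : V, 0 ≤ (mdel (-Q) {x}).det / prodNZ (-Q)) ∧
    (∑ x : V, (mdel (-Q) {x}).det / prodNZ (-Q) = 1) ∧
    (∀ z : V, ∑ x : V, ((mdel (-Q) {x}).det / prodNZ (-Q)) * Q x z = 0) ∧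
    (∀ μ : V → ℝ, (∀ x, 0 ≤ μ x) → (∑ x, μ x = 1) →
      (∀ z : V, ∑ x : V, μ x * Q x z = 0) →
      μ = fun x => (mdel (-Q) {x}).det / prodNZ (-Q)) := by
  -- V is nonempty
  have hV : Nonempty V := by
    by_contra h
    rw [not_nonempty_iff] at h
    have : Module.finrank ℝ (LinearMap.ker (Matrix.toLin' Q)) ≤ Module.finrank ℝ (V → ℝ) :=
      Submodule.finrank_le _
    rw [hnull, Module.finrank_fintype_fun_eq_card, Fintype.card_eq_zero] at this
    omega
  inhabit V
  -- entries of Q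
  have hQab : ∀ a b, Q a b = r a * (P a b - if a = b then 1 else 0) := by
    intro a b
    rw [hQ, Matrix.diagonal_mul, Matrix.sub_apply, Matrix.one_apply]
  -- row sums of Q are zero
  have hQrow : ∀ a, ∑ b, Q a b = 0 := by
    intro a
    simp_rw [hQab, ← Finset.mul_sum, Finset.sum_sub_distrib, hrow]
    simp
  -- the all-ones vector
  set o : V → ℝ := fun _ => 1 with ho
  have ho0 : o ≠ 0 := by
    intro h
    have := congrFun h default
    simp [ho] at this
  have hker1 : Q *ᵥ o = 0 := by
    ext a
    simp [Matrix.mulVec, dotProduct, ho, hQrow a]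
  -- kernel is the span of the ones vector
  have hkermem : o ∈ LinearMap.ker (Matrix.toLin' Q) := by
    rw [LinearMap.mem_ker, Matrix.toLin'_apply, hker1]
  have hspan : (ℝ ∙ o) = LinearMap.ker (Matrix.toLin' Q) := by
    apply Submodule.eq_of_le_of_finrank_le
    · rwa [Submodule.span_singleton_le_iff_mem]
    · rw [hnull, finrank_span_singleton ho0]
  have hdetQ : Q.det = 0 := Matrix.exists_mulVec_eq_zero_iff.mp ⟨o, ho0, hker1⟩
  have hdetnQ : (-Q).det = 0 := by rw [Matrix.det_neg, hdetQ, mul_zero]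
  -- Q * adjugate (-Q) = 0
  have hQadj : Q * adjugate (-Q) = 0 := by
    have := Matrix.mul_adjugate (-Q)
    rw [hdetnQ, zero_smul, neg_mul] at this
    exact neg_eq_zero.mp this
  have hadjQ : adjugate (-Q) * Q = 0 := by
    have := Matrix.adjugate_mul (-Q)
    rw [hdetnQ, zero_smul, mul_neg] at this
    exact neg_eq_zero.mp this
  -- entries of adjugate (-Q) are constant along columns
  have hconst : ∀ i j, adjugate (-Q) i j = adjugate (-Q) j j := by
    intro i j
    set c : V → ℝ := fun i => adjugate (-Q) i j with hc
    have hcmem : c ∈ LinearMap.ker (Matrix.toLin' Q) := by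
      rw [LinearMap.mem_ker, Matrix.toLin'_apply]
      ext a
      have : (Q * adjugate (-Q)) a j = 0 := by rw [hQadj]; rfl
      simpa [Matrix.mul_apply, Matrix.mulVec, dotProduct, hc] using this
    rw [← hspan] at hcmem
    obtain ⟨t, ht⟩ := Submodule.mem_span_singleton.mp hcmem
    have hi := congrFun ht i
    have hj := congrFun ht j
    simp [ho, hc] at hi hj
    rw [← hi, ← hj]
  -- the candidate stationary vector (unnormalized)
  set v : V → ℝ := fun x => (mdel (-Q) {x}).det with hv
  -- nonnegativity of each principal minor
  have hv0 : ∀ x, 0 ≤ v x := by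
    intro x
    refine det_nonneg_of_rowdom _ ?_ ?_
    · intro a b hab
      have hab' : (a : V) ≠ (b : V) := fun h => hab (Subtype.ext h)
      have h1 : (mdel (-Q) {x}) a b = -(r a.val * P a.val b.val) := by
        simp [mdel, hQab, hab']
      rw [h1]
      exact neg_nonpos.mpr (mul_nonneg (hr _).le (hpos _ _))
    · intro a
      have hax : (a : V) ≠ x := by simpa using a.prop
      have hsub : ∑ b ∈ Finset.univ.erase x, (-Q) a.val b
          = ∑ b : {a : V // a ∉ ({x} : Finset V)}, (mdel (-Q) {x}) a b := by
        refine Finset.sum_subtype _ (fun b => ?_) _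
        simp
      rw [← hsub, Finset.sum_erase_eq_sub (Finset.mem_univ x)]
      have h2 : ∑ b, (-Q) a.val b = 0 := by
        simp_rw [Matrix.neg_apply, Finset.sum_neg_distrib, hQrow]
        simp
      rw [h2]
      have h3 : (-Q) a.val x = -(r a.val * P a.val x) := by simp [hQab, hax]
      rw [h3]
      simpa using mul_nonneg (hr _).le (hpos _ _)
  -- key identity : prodNZ (-Q) = ∑ x, v x
  have hKI : prodNZ (-Q) = ∑ x, v x := by
    have h1 : (Matrix.charpoly (-Q)).coeff 1 = ∑ i, adjugate Q i i := by
      simpa using charpoly_coeff_one (-Q)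
    have h2 : adjugate (-Q) = (-1:ℝ)^(Fintype.card V - 1) • adjugate Q := by
      have h := Matrix.adjugate_smul (-1:ℝ) Q
      rw [neg_one_smul] at h
      rw [h]
    rw [prodNZ, h1, Finset.mul_sum]
    refine Finset.sum_congr rfl fun x _ => ?_
    show _ = (mdel (-Q) {x}).det
    rw [← adjugate_diag, h2, Matrix.smul_apply, smul_eq_mul]
  -- v is in the left kernel of Q
  have hvQ : ∀ z, ∑ x, v x * Q x z = 0 := by
    intro z
    have h3 : ∀ x, v x = adjugate (-Q) default x := fun x => by
      rw [hconst default x]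
      exact (adjugate_diag (-Q) x).symm
    calc ∑ x, v x * Q x z = ∑ x, adjugate (-Q) default x * Q x z := by
          refine Finset.sum_congr rfl fun x _ => by rw [h3]
      _ = (adjugate (-Q) * Q) default z := by rw [Matrix.mul_apply]
      _ = 0 := by rw [hadjQ]; rfl
  -- some component of v is nonzero
  obtain ⟨u, hu0, huQ⟩ := Matrix.exists_vecMul_eq_zero_iff.mpr hdetQ
  obtain ⟨x₀, hux₀⟩ := Function.ne_iff.mp hu0
  rw [Pi.zero_apply] at hux₀
  have hx0 : v x₀ ≠ 0 := by
    intro hvx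
    obtain ⟨w, hw0, hww⟩ := Matrix.exists_mulVec_eq_zero_iff.mpr hvx
    set wh : V → ℝ := fun a => if h : a ∈ ({x₀} : Finset V) then 0 else w ⟨a, h⟩ with hwh
    have hwhx : wh x₀ = 0 := by simp [hwh]
    have hg : ∀ a, a ≠ x₀ → (Q *ᵥ wh) a = 0 := by
      intro a ha
      have ha' : a ∉ ({x₀} : Finset V) := by simpa using ha
      have hterm : Q a x₀ * wh x₀ = 0 := by rw [hwhx, mul_zero]
      have hmv : (Q *ᵥ wh) a = ∑ b, Q a b * wh b := rfl
      rw [hmv, ← Finset.add_sum_erase _ _ (Finset.mem_univ x₀), hterm, zero_add]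
      have hsub : ∑ b ∈ Finset.univ.erase x₀, Q a b * wh b
          = ∑ b : {c : V // c ∉ ({x₀} : Finset V)}, Q a b.val * wh b.val := by
        refine Finset.sum_subtype _ (fun b => ?_) _
        simp
      rw [hsub]
      have hmw := congrFun hww ⟨a, ha'⟩
      have hmw2 : ∑ b : {c : V // c ∉ ({x₀} : Finset V)},
          (-Q) a b.val * w b = 0 := by
        simpa [Matrix.mulVec, dotProduct, mdel] using hmw
      have : ∑ b : {c : V // c ∉ ({x₀} : Finset V)}, Q a b.val * wh b.val
          = - ∑ b : {c : V // c ∉ ({x₀} : Finset V)}, (-Q) a b.val * w b := by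
        rw [← Finset.sum_neg_distrib]
        refine Finset.sum_congr rfl fun b _ => ?_
        have : wh b.val = w b := by
          rw [hwh]
          simp only [dif_neg b.prop]
        rw [this]
        simp
      rw [this, hmw2, neg_zero]
    have hgx : (Q *ᵥ wh) x₀ = 0 := by
      have hdot : u ⬝ᵥ (Q *ᵥ wh) = 0 := by
        rw [dotProduct_mulVec, huQ, zero_dotProduct]
      have hsum : u ⬝ᵥ (Q *ᵥ wh) = u x₀ * (Q *ᵥ wh) x₀ := by
        rw [dotProduct]
        refine Finset.sum_eq_single x₀ (fun b _ hb => ?_) (fun h => absurd (Finset.mem_univ _) h)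
        rw [hg b hb, mul_zero]
      rw [hsum] at hdot
      exact (mul_eq_zero.mp hdot).resolve_left hux₀
    have hwhker : Q *ᵥ wh = 0 := by
      ext a
      rcases eq_or_ne a x₀ with rfl | ha
      · exact hgx
      · exact hg a ha
    have hwhmem : wh ∈ LinearMap.ker (Matrix.toLin' Q) := by
      rw [LinearMap.mem_ker, Matrix.toLin'_apply, hwhker]
    rw [← hspan] at hwhmem
    obtain ⟨t, ht⟩ := Submodule.mem_span_singleton.mp hwhmem
    have ht0 : t = 0 := by
      have := congrFun ht x₀
      simpa [ho, hwhx] using this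
    have hwhz : wh = 0 := by rw [← ht, ht0, zero_smul]
    apply hw0
    funext b
    have hbp : ¬ (b : V) = x₀ := by simpa using b.prop
    simpa [hwh, hbp] using congrFun hwhz b.val
  have hvpos : 0 < v x₀ := (hv0 x₀).lt_of_ne (Ne.symm hx0)
  have hS : 0 < ∑ x, v x :=
    lt_of_lt_of_le hvpos (Finset.single_le_sum (fun i _ => hv0 i) (Finset.mem_univ x₀))
  have hprodpos : 0 < prodNZ (-Q) := by rw [hKI]; exact hS
  have hprodne : prodNZ (-Q) ≠ 0 := ne_of_gt hprodpos
  -- left kernel has dimension 1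
  have hvne : v ≠ 0 := fun h => hx0 (by rw [h]; rfl)
  have hcard : Module.finrank ℝ (V → ℝ) = Fintype.card V := Module.finrank_fintype_fun_eq_card ℝ
  have hrk : Q.rank + 1 = Fintype.card V := by
    have h4 := LinearMap.finrank_range_add_finrank_ker (Q.mulVecLin)
    rw [← Matrix.toLin'_apply', hnull, hcard] at h4
    exact h4
  have hrkT : Module.finrank ℝ (LinearMap.ker (Qᵀ.mulVecLin)) = 1 := by
    have h4 := LinearMap.finrank_range_add_finrank_ker (Qᵀ.mulVecLin)
    rw [hcard] at h4
    have h5 : (Qᵀ).rank = Q.rank := Matrix.rank_transpose Q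
    have h6 : Module.finrank ℝ (LinearMap.range (Qᵀ.mulVecLin)) = (Qᵀ).rank := rfl
    omega
  have hvmem : v ∈ LinearMap.ker (Qᵀ.mulVecLin) := by
    rw [LinearMap.mem_ker]
    ext z
    have : (Qᵀ.mulVecLin v) z = ∑ x, v x * Q x z := by
      simp [Matrix.mulVecLin_apply, Matrix.mulVec_transpose, Matrix.vecMul,
        dotProduct, mul_comm]
    rw [this, hvQ z]
    rfl
  have hspanT : (ℝ ∙ v) = LinearMap.ker (Qᵀ.mulVecLin) := by
    apply Submodule.eq_of_le_of_finrank_le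
    · rwa [Submodule.span_singleton_le_iff_mem]
    · rw [hrkT, finrank_span_singleton hvne]
  refine ⟨hprodpos, fun x => div_nonneg (hv0 x) hprodpos.le, ?_, ?_, ?_⟩
  · rw [← Finset.sum_div, ← hKI, div_self hprodne]
  · intro z
    simp_rw [div_mul_eq_mul_div, ← Finset.sum_div]
    rw [div_eq_zero_iff]; left; exact hvQ z
  · intro μ hμ0 hμ1 hμQ
    have hμmem : μ ∈ LinearMap.ker (Qᵀ.mulVecLin) := by
      rw [LinearMap.mem_ker]
      ext z
      have : (Qᵀ.mulVecLin μ) z = ∑ x, μ x * Q x z := by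
        simp [Matrix.mulVecLin_apply, Matrix.mulVec_transpose, Matrix.vecMul,
          dotProduct, mul_comm]
      rw [this, hμQ z]
      rfl
    rw [← hspanT] at hμmem
    obtain ⟨t, ht⟩ := Submodule.mem_span_singleton.mp hμmem
    have hsum : t * ∑ x, v x = 1 := by
      rw [← hμ1, ← ht, Finset.mul_sum]
      rfl
    have htval : t = 1 / prodNZ (-Q) := by
      rw [hKI]
      field_simp
      rw [← hsum, mul_comm]
    funext x
    have hμx : μ x = t * v x := by rw [← ht]; rfl
    rw [hμx, htval]
    ring
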